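/- Let f₀(t) = 2(1−t) on [0,1] with DF F₀(t) = 2t − t², x₀ ∈ (0,1), and let g be a nonnegative convex integrable function on [0,∞) with G(t) = ∫₀ᵗ g. If c := g(x₀) − f₀(x₀) < 0, then sup_{t∈[0,x₀]} max(|G(t) − F₀(t)|, |(G(x₀) − F₀(x₀)) − (G(t) − F₀(t))|) ≥ |c| x₀ / 8. -/

import Mathlib

open Set MeasureTheory intervalIntegral

set_option maxHeartbeats 1000000 in
theorem stmt_15 (x₀ : ℝ) (hx₀ : x₀ ∈ Ioo (0 : ℝ) 1)
    (g : ℝ → ℝ) (hg_nonneg : ∀ t ∈ Ici (0 : ℝ), 0 ≤ g t)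
    (hg_conv : ConvexOn ℝ (Ici (0 : ℝ)) g)
    (hg_int : IntegrableOn g (Ici (0 : ℝ)))
    (G F₀ : ℝ → ℝ)
    (hG : ∀ t, G t = ∫ s in (0 : ℝ)..t, g s)
    (hF₀ : ∀ t, F₀ t = 2 * t - t ^ 2)
    (c : ℝ) (hcdef : c = g x₀ - 2 * (1 - x₀)) (hc : c < 0) :
    |c| * x₀ / 8 ≤ ⨆ t : Icc (0 : ℝ) x₀,
      max |G t - F₀ t| |(G x₀ - F₀ x₀) - (G t - F₀ t)| := by
  obtain ⟨hx0, hx1⟩ := hx₀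
  obtain ⟨h, hh⟩ : ∃ h : ℝ → ℝ, h = fun s => g s + (2 * s - 2) := ⟨_, rfl⟩
  have hcx : h x₀ = c := by simp only [hh]; rw [hcdef]; ring
  have h0mem : (0:ℝ) ∈ Icc (0:ℝ) x₀ := ⟨le_refl _, hx0.le⟩
  have hxmem : x₀ ∈ Icc (0:ℝ) x₀ := ⟨hx0.le, le_refl _⟩
  -- convexity of h on Icc 0 x₀
  have hconv : ConvexOn ℝ (Icc (0:ℝ) x₀) h := by
    rw [hh]
    refine (hg_conv.subset (fun s hs => hs.1) (convex_Icc _ _)).add ?_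
    refine ⟨convex_Icc _ _, ?_⟩
    intro x _ y _ a b ha hb hab
    simp only [smul_eq_mul]
    nlinarith
  -- chord inequality
  have chord : ∀ p q r : ℝ, p ∈ Icc (0:ℝ) x₀ → r ∈ Icc (0:ℝ) x₀ → p ≤ q → q ≤ r → p < r →
      (r - p) * h q ≤ (r - q) * h p + (q - p) * h r := by
    intro p q r hp hr hpq hqr hpr
    have hrp : (0:ℝ) < r - p := sub_pos.2 hpr
    have h1 : (0:ℝ) ≤ (r - q)/(r - p) := div_nonneg (by linarith) hrp.le
    have h2 : (0:ℝ) ≤ (q - p)/(r - p) := div_nonneg (by linarith) hrp.le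
    have hsum : (r - q)/(r - p) + (q - p)/(r - p) = 1 := by field_simp; ring
    have key := hconv.2 hp hr h1 h2 hsum
    simp only [smul_eq_mul] at key
    have harg : (r - q)/(r - p) * p + (q - p)/(r - p) * r = q := by field_simp; ring
    rw [harg] at key
    have h3 := mul_le_mul_of_nonneg_left key hrp.le
    have h4 : (r - p) * ((r - q)/(r - p) * h p + (q - p)/(r - p) * h r)
        = (r - q) * h p + (q - p) * h r := by field_simp
    linarith [h4 ▸ h3]
  -- integrability
  have hgint : ∀ a b : ℝ, a ∈ Icc (0:ℝ) x₀ → b ∈ Icc (0:ℝ) x₀ →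
      IntervalIntegrable g volume a b := by
    intro a b ha hb
    refine (hg_int.mono_set ?_).intervalIntegrable
    intro s hs
    exact le_trans (le_min ha.1 hb.1) hs.1
  have hlin : ∀ a b : ℝ, IntervalIntegrable (fun s : ℝ => 2 * s - 2) volume a b := by
    intro a b
    exact (by continuity : Continuous fun s : ℝ => 2 * s - 2).intervalIntegrable _ _
  have hint : ∀ a b : ℝ, a ∈ Icc (0:ℝ) x₀ → b ∈ Icc (0:ℝ) x₀ →
      IntervalIntegrable h volume a b := by
    intro a b ha hb
    rw [hh]
    exact (hgint a b ha hb).add (hlin a b)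
  -- integral of affine functions
  have hlinI : ∀ u v a b : ℝ, (∫ s in a..b, (u * s + v))
      = u * (b^2 - a^2)/2 + v * (b - a) := by
    intro u v a b
    have hcu : Continuous fun s : ℝ => u * s := by continuity
    rw [intervalIntegral.integral_add (hcu.intervalIntegrable a b) intervalIntegrable_const,
      intervalIntegral.integral_const_mul, integral_id, intervalIntegral.integral_const]
    simp [smul_eq_mul]; ring
  have hF : ∀ a b : ℝ, (∫ s in a..b, (2 * s - 2)) = (b^2 - 2*b) - (a^2 - 2*a) := by
    intro a b
    have : ∀ s : ℝ, 2 * s - 2 = 2 * s + (-2) := fun s => by ring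
    simp_rw [this, hlinI]
    ring
  -- bridge
  have hAB : ∀ a b : ℝ, a ∈ Icc (0:ℝ) x₀ → b ∈ Icc (0:ℝ) x₀ →
      (∫ s in a..b, h s) = (G b - F₀ b) - (G a - F₀ a) := by
    intro a b ha hb
    have hadj := integral_add_adjacent_intervals (hgint 0 a h0mem ha) (hgint a b ha hb)
    have hsplit : (∫ s in a..b, h s) = (∫ s in a..b, g s) + ∫ s in a..b, (2 * s - 2) := by
      simp only [hh]
      exact intervalIntegral.integral_add (hgint a b ha hb) (hlin a b)
    rw [hsplit, hF a b, hG a, hG b, hF₀ a, hF₀ b]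
    linarith
  have hA : ∀ b : ℝ, b ∈ Icc (0:ℝ) x₀ → (∫ s in (0:ℝ)..b, h s) = G b - F₀ b := by
    intro b hb
    rw [hAB 0 b h0mem hb, hG 0, hF₀ 0]
    simp
  -- the set S and t₀
  set S : Set ℝ := {s | s ∈ Icc (0:ℝ) x₀ ∧ h s ≤ 0} with hS
  have hx₀S : x₀ ∈ S := ⟨hxmem, by rw [hcx]; exact hc.le⟩
  have hSne : S.Nonempty := ⟨x₀, hx₀S⟩
  have hSbdd : BddBelow S := ⟨0, fun s hs => hs.1.1⟩
  set t₀ := sInf S with ht₀def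
  have ht₀0 : 0 ≤ t₀ := le_csInf hSne (fun s hs => hs.1.1)
  have ht₀x : t₀ ≤ x₀ := csInf_le hSbdd hx₀S
  have ht₀mem : t₀ ∈ Icc (0:ℝ) x₀ := ⟨ht₀0, ht₀x⟩
  have hpos : ∀ s : ℝ, 0 ≤ s → s < t₀ → 0 < h s := by
    intro s hs0 hst
    by_contra hle
    push_neg at hle
    exact absurd (csInf_le hSbdd ⟨⟨hs0, hst.le.trans ht₀x⟩, hle⟩) (not_le.2 hst)
  have hneg : ∀ s : ℝ, t₀ < s → s ≤ x₀ → h s ≤ 0 := by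
    intro s hts hsx
    obtain ⟨u, huS, hus⟩ := exists_lt_of_csInf_lt hSne hts
    rcases eq_or_lt_of_le hsx with rfl | hsx'
    · rw [hcx]; exact hc.le
    · have hux : u < x₀ := lt_trans hus hsx'
      have hch := chord u s x₀ huS.1 hxmem hus.le hsx hux
      rw [hcx] at hch
      nlinarith [huS.2, huS.1.1, huS.1.2,
        mul_nonpos_of_nonneg_of_nonpos (by linarith : (0:ℝ) ≤ x₀ - s) huS.2]
  -- the main existence claim
  have habs : |c| = -c := abs_of_neg hc
  have main : ∃ t ∈ Icc (0:ℝ) x₀,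
      |c| * x₀ / 8 ≤ max |G t - F₀ t| |(G x₀ - F₀ x₀) - (G t - F₀ t)| := by
    rcases le_or_gt t₀ (x₀/2) with hcaseA | hcaseB
    · -- Case A : use t = t₀, second component
      refine ⟨t₀, ht₀mem, ?_⟩
      set m := (t₀ + x₀)/2 with hm
      have hm1 : t₀ < m := by simp only [hm]; linarith
      have hm2 : m < x₀ := by simp only [hm]; linarith
      have hmmem : m ∈ Icc (0:ℝ) x₀ := ⟨by linarith, hm2.le⟩
      have hhm : h m ≤ 0 := hneg m hm1 hm2.le
      have hsplit := integral_add_adjacent_intervals (hint t₀ m ht₀mem hmmem)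
        (hint m x₀ hmmem hxmem)
      have hp1 : (∫ s in t₀..m, h s) ≤ 0 := by
        rw [integral_of_le hm1.le]
        refine setIntegral_nonpos measurableSet_Ioc ?_
        intro s hs
        exact hneg s hs.1 (hs.2.trans hm2.le)
      have hxm : (0:ℝ) < x₀ - m := by linarith
      have hp2 : (∫ s in m..x₀, h s) ≤ c * x₀ / 8 := by
        have hbd : (∫ s in m..x₀, h s)
            ≤ ∫ s in m..x₀, (c/(x₀ - m) * s + (-(c*m/(x₀ - m)))) := by
          refine integral_mono_on hm2.le (hint m x₀ hmmem hxmem) ?_ ?_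
          · exact ((continuous_const.mul continuous_id').add continuous_const).intervalIntegrable _ _
          · intro s hs
            have heval : c/(x₀ - m) * s + (-(c*m/(x₀ - m))) = c * (s - m)/(x₀ - m) := by
              field_simp; ring
            rw [heval, le_div_iff₀ hxm]
            have hch := chord m s x₀ hmmem hxmem hs.1 hs.2 hm2
            rw [hcx] at hch
            nlinarith [mul_nonpos_of_nonneg_of_nonpos (by linarith [hs.2] : (0:ℝ) ≤ x₀ - s) hhm]
        rw [hlinI] at hbd
        have hval : c/(x₀ - m) * (x₀^2 - m^2)/2 + (-(c*m/(x₀ - m))) * (x₀ - m)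
            = c * (x₀ - m) / 2 := by
          field_simp; ring
        have hxm4 : x₀/4 ≤ x₀ - m := by simp only [hm]; linarith
        have hstep : c * (x₀ - m) / 2 ≤ c * x₀ / 8 := by
          have := mul_le_mul_of_nonpos_left hxm4 hc.le
          linarith
        linarith
      have hBint : (∫ s in t₀..x₀, h s) ≤ c * x₀ / 8 := by linarith
      rw [hAB t₀ x₀ ht₀mem hxmem] at hBint
      refine le_trans ?_ (le_max_right _ _)
      have hstep : |c| * x₀ / 8 ≤ -((G x₀ - F₀ x₀) - (G t₀ - F₀ t₀)) := by
        rw [habs]; linarith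
      exact le_trans hstep (neg_le_abs _)
    · -- Case B : t₀ > x₀/2
      have ht₀pos : 0 < t₀ := by linarith
      have hh0 : 0 < h 0 := hpos 0 le_rfl ht₀pos
      have ht₀lt : t₀ < x₀ := by
        rcases eq_or_lt_of_le ht₀x with heq | hlt
        · exfalso
          have h₁ := hpos (x₀/2) (by linarith) (by rw [heq]; linarith)
          have hh1c : 0 < h (x₀/2) - c := by linarith
          obtain ⟨ε, hε⟩ : ∃ ε : ℝ, ε = (x₀/2) * (-c) / (2 * (h (x₀/2) - c)) := ⟨_, rfl⟩
          have hεpos : 0 < ε := by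
            rw [hε]
            exact div_pos (mul_pos (by linarith) (by linarith)) (by linarith)
          have hεe : ε * (h (x₀/2) - c) = x₀ * (-c) / 4 := by
            rw [hε]; field_simp; ring
          have hε4 : ε < x₀/4 := by
            have hlt' : ε * (h (x₀/2) - c) < (x₀/4) * (h (x₀/2) - c) := by
              rw [hεe]; nlinarith [mul_pos hx0 h₁]
            exact lt_of_mul_lt_mul_right hlt' hh1c.le
          have hwpos : 0 < h (x₀ - ε) := hpos (x₀ - ε) (by linarith) (by rw [heq]; linarith)
          have hch := chord (x₀/2) (x₀ - ε) x₀ ⟨by linarith, by linarith⟩ hxmem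
            (by linarith) (by linarith) (by linarith)
          rw [hcx] at hch
          nlinarith [mul_pos hx0 hwpos, mul_neg_of_pos_of_neg hx0 hc]
        · exact hlt
      -- show h t₀ = 0
      have hht₀le : h t₀ ≤ 0 := by
        by_contra hgt
        push_neg at hgt
        obtain ⟨δ, hδ⟩ : ∃ δ : ℝ, δ = min ((x₀ - t₀)/2) (t₀ * h t₀ / (h 0 + h t₀)) := ⟨_, rfl⟩
        have hδpos : 0 < δ := by
          rw [hδ]
          exact lt_min (by linarith) (div_pos (mul_pos ht₀pos hgt) (by linarith))
        have hδ1 : δ ≤ (x₀ - t₀)/2 := hδ ▸ min_le_left _ _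
        have hwx : t₀ + δ ≤ x₀ := by linarith
        have hδb : δ * (h 0 + h t₀) ≤ t₀ * h t₀ := by
          have h2 : δ ≤ t₀ * h t₀ / (h 0 + h t₀) := hδ ▸ min_le_right _ _
          exact (le_div_iff₀ (by linarith)).1 h2
        have hhw : h (t₀ + δ) ≤ 0 := hneg _ (by linarith) hwx
        have hch := chord 0 t₀ (t₀ + δ) h0mem ⟨by linarith, hwx⟩ ht₀0
          (by linarith) (by linarith)
        nlinarith [mul_pos hδpos hgt, mul_nonpos_of_nonneg_of_nonpos ht₀0 hhw]
      have hht₀ge : 0 ≤ h t₀ := by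
        by_contra hlt
        push_neg at hlt
        obtain ⟨δ, hδ⟩ : ∃ δ : ℝ, δ = t₀ * (-h t₀) / (2 * (h 0 - h t₀)) := ⟨_, rfl⟩
        have hδpos : 0 < δ := by
          rw [hδ]
          exact div_pos (mul_pos ht₀pos (by linarith)) (by linarith)
        have hne : h 0 - h t₀ ≠ 0 := by linarith
        have hδe : δ * (h 0 - h t₀) = t₀ * (-h t₀) / 2 := by
          rw [hδ]; field_simp
        have hδ2 : δ < t₀/2 := by
          have hlt' : δ * (h 0 - h t₀) < (t₀/2) * (h 0 - h t₀) := by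
            rw [hδe]; nlinarith [mul_pos ht₀pos hh0]
          exact lt_of_mul_lt_mul_right hlt' (by linarith)
        have hspos : 0 < h (t₀ - δ) := hpos (t₀ - δ) (by linarith) (by linarith)
        have hch := chord 0 (t₀ - δ) t₀ h0mem ht₀mem (by linarith) (by linarith) ht₀pos
        nlinarith [mul_pos ht₀pos hspos, mul_neg_of_pos_of_neg ht₀pos hlt]
      have hht₀ : h t₀ = 0 := le_antisymm hht₀le hht₀ge
      have hxt : (0:ℝ) < x₀ - t₀ := by linarith
      -- pointwise lower bound on [0, t₀]
      have hlow : ∀ s ∈ Icc (0:ℝ) t₀,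
          (-(-c)/(x₀ - t₀)) * s + (-c) * t₀/(x₀ - t₀) ≤ h s := by
        intro s hsmem
        have heval : (-(-c)/(x₀ - t₀)) * s + (-c) * t₀/(x₀ - t₀) = (-c) * (t₀ - s)/(x₀ - t₀) := by
          field_simp; ring
        rw [heval, div_le_iff₀ hxt]
        rcases eq_or_lt_of_le hsmem.2 with rfl | hst
        · rw [hht₀]; nlinarith
        · have hch := chord s t₀ x₀ ⟨hsmem.1, by linarith⟩ hxmem hsmem.2 ht₀x
            (by linarith)
          rw [hcx, hht₀] at hch
          nlinarith
      have hAbd : (-c) * x₀ / 8 ≤ ∫ s in (0:ℝ)..t₀, h s := by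
        have hmono : (∫ s in (0:ℝ)..t₀, ((-(-c)/(x₀ - t₀)) * s + (-c) * t₀/(x₀ - t₀)))
            ≤ ∫ s in (0:ℝ)..t₀, h s := by
          refine integral_mono_on ht₀0 ?_ (hint 0 t₀ h0mem ht₀mem) hlow
          exact ((continuous_const.mul continuous_id').add continuous_const).intervalIntegrable _ _
        rw [hlinI] at hmono
        have hval : (-(-c)/(x₀ - t₀)) * (t₀^2 - 0^2)/2 + ((-c) * t₀/(x₀ - t₀)) * (t₀ - 0)
            = (-c) * t₀^2 / (2 * (x₀ - t₀)) := by
          field_simp; ring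
        have hineq : (-c) * x₀ / 8 ≤ (-c) * t₀^2 / (2 * (x₀ - t₀)) := by
          rw [le_div_iff₀ (by linarith : (0:ℝ) < 2 * (x₀ - t₀))]
          have h1 : x₀ * (x₀ - t₀) ≤ 4 * t₀^2 := by nlinarith
          have h2 := mul_le_mul_of_nonneg_left h1 (by linarith : (0:ℝ) ≤ -c)
          nlinarith
        linarith
      refine ⟨t₀, ht₀mem, ?_⟩
      rw [hA t₀ ht₀mem] at hAbd
      refine le_trans ?_ (le_max_left _ _)
      rw [habs]
      exact le_trans (by linarith) (le_abs_self _)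
  -- bounded above
  set I : ℝ := ∫ s in (0:ℝ)..x₀, |h s| with hI
  have hbound : ∀ t : ℝ, t ∈ Icc (0:ℝ) x₀ →
      max |G t - F₀ t| |(G x₀ - F₀ x₀) - (G t - F₀ t)| ≤ I := by
    intro t ht
    have h1 : IntervalIntegrable (fun s => |h s|) volume 0 t := (hint 0 t h0mem ht).abs
    have h2 : IntervalIntegrable (fun s => |h s|) volume t x₀ := (hint t x₀ ht hxmem).abs
    have hadj := integral_add_adjacent_intervals h1 h2
    have hn1 : 0 ≤ ∫ s in (0:ℝ)..t, |h s| :=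
      integral_nonneg ht.1 (fun s _ => abs_nonneg _)
    have hn2 : 0 ≤ ∫ s in t..x₀, |h s| :=
      integral_nonneg ht.2 (fun s _ => abs_nonneg _)
    have e1 : |G t - F₀ t| ≤ I := by
      rw [← hA t ht]
      calc |∫ s in (0:ℝ)..t, h s| ≤ ∫ s in (0:ℝ)..t, |h s| :=
            abs_integral_le_integral_abs ht.1
        _ ≤ I := by rw [hI]; linarith
    have e2 : |(G x₀ - F₀ x₀) - (G t - F₀ t)| ≤ I := by
      rw [← hAB t x₀ ht hxmem]
      calc |∫ s in t..x₀, h s| ≤ ∫ s in t..x₀, |h s| :=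
            abs_integral_le_integral_abs ht.2
        _ ≤ I := by rw [hI]; linarith
    exact max_le e1 e2
  have hbdd : BddAbove (range fun t : Icc (0:ℝ) x₀ =>
      max |G t - F₀ t| |(G x₀ - F₀ x₀) - (G t - F₀ t)|) := by
    refine ⟨I, ?_⟩
    rintro x ⟨⟨t, ht⟩, rfl⟩
    exact hbound t ht
  obtain ⟨t, ht, hle⟩ := main
  calc |c| * x₀ / 8 ≤ max |G t - F₀ t| |(G x₀ - F₀ x₀) - (G t - F₀ t)| := hle
    _ ≤ _ := le_ciSup hbdd ⟨t, ht⟩
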